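/- Suppose a string y of length at least k·l (for positive integer l = |w₂| and integer k ≥ 1) is a prefix of w₂^∞ for an unbordered string w₂, and also a suffix-aligned factor of powers of a primitive string w₁ with |w₁| not a multiple of |w₂| and |w₁| < k·|w₂|; then we reach a contradiction: a nontrivial suffix of w₂ that is also a prefix of w₂ would exist. Formally: if w₂ is unbordered and some string has both a prefix equal to w₂^k and period |w₁| with (k-1)|w₂| < |w₁| < k|w₂| and length ≥ k|w₂|, then there is a nonempty proper prefix of w₂ equal to a suffix of w₂, contradiction. Hence no string of length ≥ k|w₂| can simultaneously be a prefix of w₂^∞ and have period p with (k-1)|w₂| < p < k|w₂|. -/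

import Mathlib

def Unbordered {α : Type*} (s : List α) : Prop :=
  ∀ b : List α, b ≠ [] → b ≠ s → b <+: s → ¬ b <:+ s

def IsPrefixOfInfPow {α : Type*} (x w : List α) : Prop :=
  ∃ m : ℕ, x <+: (List.replicate m w).flatten

/-- `s` has period `p`: `s[i] = s[i+p]` whenever both indices are valid. -/
def HasPeriod {α : Type*} (s : List α) (p : ℕ) : Prop :=
  ∀ i : ℕ, i + p < s.length → s[i]? = s[i + p]?

lemma flatten_replicate_get? {α : Type*} (w : List α) :
    ∀ m j, (List.replicate m w).flatten[j]? = if j < m * w.length then w[j % w.length]? else none := by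
  intro m
  induction m with
  | zero => intro j; simp
  | succ n ih =>
    intro j
    rw [List.replicate_succ, List.flatten_cons]
    by_cases hj : j < w.length
    · have hl : 0 < w.length := by omega
      rw [List.getElem?_append_left hj, Nat.mod_eq_of_lt hj, if_pos]
      calc j < w.length := hj
        _ ≤ (n+1) * w.length := by nlinarith
    · push_neg at hj
      rw [List.getElem?_append_right hj, ih]
      have h1 : j % w.length = (j - w.length) % w.length := by
        conv_lhs => rw [show j = (j - w.length) + w.length by omega]
        rw [Nat.add_mod_right]
      have h2 : (n+1) * w.length = n * w.length + w.length := by ring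
      rw [← h1]
      by_cases h : j - w.length < n * w.length
      · rw [if_pos h, if_pos (by omega)]
      · rw [if_neg h, if_neg (by omega)]

/-- No string of length at least `k·|w₂|` can simultaneously be a prefix of
`w₂^∞` for an unbordered `w₂` and have a period `p` strictly between
`(k-1)·|w₂|` and `k·|w₂|`. -/
theorem no_intermediate_period {α : Type*} (w₂ s : List α) (k p : ℕ)
    (hub : Unbordered w₂) (hk : 1 ≤ k)
    (hslen : k * w₂.length ≤ s.length)
    (hpre : IsPrefixOfInfPow s w₂)
    (hplo : (k - 1) * w₂.length < p) (hphi : p < k * w₂.length)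
    (hper : HasPeriod s p) :
    False := by
  set l := w₂.length with hldef
  have hl : 0 < l := by
    rcases Nat.eq_zero_or_pos l with h | h
    · rw [h, Nat.mul_zero] at hphi; exact absurd hphi (Nat.not_lt_zero p)
    · exact h
  have hkl : k * l = (k - 1) * l + l := by
    have h : k = (k - 1) + 1 := by omega
    conv_lhs => rw [h, Nat.add_mul, Nat.one_mul]
  set d := p - (k - 1) * l with hddef
  have hd1 : 0 < d := by omega
  have hd2 : d < l := by omega
  have hp : p = (k - 1) * l + d := by omega
  obtain ⟨m, u, hu⟩ := hpre
  -- get? of s agrees with flatten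
  have hs : ∀ j, j < s.length → s[j]? = (List.replicate m w₂).flatten[j]? := by
    intro j hj
    rw [← hu, List.getElem?_append_left hj]
  have hmlen : s.length ≤ m * l := by
    have := congrArg List.length hu
    simp [List.length_flatten] at this
    rw [← hldef] at this
    omega
  -- key: w₂ has period d on first l characters
  have hml : m * w₂.length = m * l := by rw [hldef]
  have key : ∀ i, i < l - d → w₂[i]? = w₂[i + d]? := by
    intro i hi
    have h1 : i + p < s.length := by
      have : i + p < k * l := by omega
      omega
    have h2 := hper i h1
    have hik : i < s.length := by omega
    rw [hs i hik, hs (i + p) h1, flatten_replicate_get?, flatten_replicate_get?] at h2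
    rw [if_pos (by omega), if_pos (by omega)] at h2
    have e1 : i % l = i := Nat.mod_eq_of_lt (by omega)
    have e2 : (i + p) % l = i + d := by
      have hip : i + p = (i + d) + (k - 1) * l := by omega
      rw [hip, hldef, Nat.add_mul_mod_self_right, ← hldef]
      exact Nat.mod_eq_of_lt (by omega)
    rw [e1, e2] at h2
    exact h2
  -- the border
  set b := w₂.take (l - d) with hbdef
  have hblen : b.length = l - d := by simp [hbdef]; omega
  have hbne : b ≠ [] := by
    intro h; rw [h] at hblen; simp at hblen; omega
  have hbne2 : b ≠ w₂ := by
    intro h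
    have := congrArg List.length h
    rw [hblen] at this
    omega
  have hbpre : b <+: w₂ := List.take_prefix _ _
  have hbsuf : b <:+ w₂ := by
    have heq : w₂.drop d = b := by
      apply List.ext_getElem?
      intro i
      rw [List.getElem?_drop]
      by_cases hi : i < l - d
      · rw [(List.getElem?_take_of_lt (by omega) : b[i]? = w₂[i]?)]
        rw [Nat.add_comm]
        exact (key i hi).symm
      · have : b[i]? = none := List.getElem?_eq_none_iff.mpr (by omega)
        rw [this]
        exact List.getElem?_eq_none_iff.mpr (by omega)
    rw [← heq]
    exact List.drop_suffix _ _
  exact hub b hbne hbne2 hbpre hbsuf
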